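/- arXiv:1709.02772 — 2 statements merged into one kernel-verified Lean document; each statement's English description precedes it below -/
import Mathlib

section
/- If H = (a₁,…,a_n; ε₁,…,ε_n) is a naive EGK datum of length n, then Υ(H) = (n₁,…,n_r; m₁,…,m_r; ζ₁,…,ζ_r) is an EGK datum of length n. -/
open Matrix
open scoped Classical

noncomputable section

/-- The data of a normalized additive discrete valuation `ord` on a field `F`
(`ord ϖ = 1` for a prime element `ϖ`, `ord 0 = ∞`), together with the axioms making `F`
a non-archimedean local field: `ord` is a surjective discrete valuation, the residue
field is finite, and `F` is complete. -/
structure LocalFieldData (F : Type*) [Field F] where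
  ord : F → WithTop ℤ
  ord_zero : ord 0 = ⊤
  ord_eq_top : ∀ x : F, ord x = ⊤ → x = 0
  ord_one : ord 1 = 0
  ord_neg : ∀ x : F, ord (-x) = ord x
  ord_mul : ∀ x y : F, ord (x * y) = ord x + ord y
  ord_add : ∀ x y : F, min (ord x) (ord y) ≤ ord (x + y)
  ord_surj : ∀ m : ℤ, ∃ x : F, ord x = (m : WithTop ℤ)
  residue_finite : ∃ S : Finset F, ∀ x : F, 0 ≤ ord x → ∃ s ∈ S, 0 < ord (x - s)
  complete : ∀ f : ℕ → F,
    (∀ N : ℤ, ∃ M : ℕ, ∀ m ≥ M, ∀ k ≥ M, (N : WithTop ℤ) ≤ ord (f m - f k)) →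
    ∃ L : F, ∀ N : ℤ, ∃ M : ℕ, ∀ m ≥ M, (N : WithTop ℤ) ≤ ord (f m - L)

/-- The (non-strict) lexicographic order on sequences: `y ⪯ z`. -/
def lexLE {n : ℕ} (y z : Fin n → ℤ) : Prop :=
  y = z ∨ ∃ j : Fin n, y j < z j ∧ ∀ i : Fin n, i < j → y i = z i

/-- `d` is a square in `F`. -/
def IsSq {F : Type*} [Field F] (d : F) : Prop := ∃ y : F, y ^ 2 = d

/-- `D_B = (-4)^{⌊n/2⌋} · det B`. -/
def DB {F : Type*} [Field F] {n : ℕ} (B : Matrix (Fin n) (Fin n) F) : F :=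
  (-4 : F) ^ (n / 2) * B.det

/-- The upper-left `m × m` submatrix `B^{(m)}` (junk entries `0` out of range). -/
def upperLeft {α : Type*} [Zero α] {n : ℕ} (B : Matrix (Fin n) (Fin n) α) (m : ℕ) :
    Matrix (Fin m) (Fin m) α :=
  Matrix.of fun i j =>
    if h : (i : ℕ) < n ∧ (j : ℕ) < n then B ⟨(i : ℕ), h.1⟩ ⟨(j : ℕ), h.2⟩ else 0

/-- The first `m` entries of a sequence (junk value `0` out of range). -/
def restrictSeq {n : ℕ} (a : Fin n → ℤ) (m : ℕ) : Fin m → ℤ :=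
  fun i => if h : (i : ℕ) < n then a ⟨(i : ℕ), h⟩ else 0

/-- An `a`-admissible involution `σ` (Definition 1.6). -/
def Admissible {n : ℕ} (a : Fin n → ℤ) (σ : Equiv.Perm (Fin n)) : Prop :=
  (∀ i, σ (σ i) = i) ∧
  -- (i) 𝒫⁰ has at most two elements
  (∀ i j k : Fin n, σ i = i → σ j = j → σ k = k → i = j ∨ i = k ∨ j = k) ∧
  -- (i) two distinct fixed points have different parities of `a`
  (∀ i j : Fin n, σ i = i → σ j = j → i ≠ j → ¬ (a i % 2 = a j % 2)) ∧
  -- (i) a fixed point is maximal in its block and maximal among `𝒫⁰ ∪ 𝒫⁺` of the same parity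
  (∀ i : Fin n, σ i = i →
    (∀ j : Fin n, a j = a i → j ≤ i) ∧
    ∀ j : Fin n, (σ j = j ∨ a (σ j) < a j) → a j % 2 = a i % 2 → j ≤ i) ∧
  -- (ii) at most one element of `I_s ∩ 𝒫⁻`
  (∀ i j : Fin n, a i = a j → a i < a (σ i) → a j < a (σ j) → i = j) ∧
  -- (ii) an element of `I_s ∩ 𝒫⁻` is maximal in `I_s` and is paired with the minimum
  (∀ i : Fin n, a i < a (σ i) →
    (∀ j : Fin n, a j = a i → j ≤ i) ∧
    IsLeast {j : Fin n | a (σ j) < a j ∧ i < j ∧ a j % 2 = a i % 2} (σ i)) ∧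
  -- (iii) at most one element of `I_s ∩ 𝒫⁺`
  (∀ i j : Fin n, a i = a j → a (σ i) < a i → a (σ j) < a j → i = j) ∧
  -- (iii) an element of `I_s ∩ 𝒫⁺` is minimal in `I_s` and is paired with the maximum
  (∀ i : Fin n, a (σ i) < a i →
    (∀ j : Fin n, a j = a i → i ≤ j) ∧
    IsGreatest {j : Fin n | a j < a (σ j) ∧ j < i ∧ a j % 2 = a i % 2} (σ i)) ∧
  -- (iv)
  (∀ i : Fin n, a i = a (σ i) → (((i : ℕ) : ℤ) - ((σ i : Fin n) : ℕ)).natAbs ≤ 1)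

/-- The combinatorial data of a decomposition of an `n × n` matrix into `r` consecutive
diagonal blocks, each of size `1` or `2`, the `s`-th block being scaled by `2^(k s)`:
`c` is the sequence of cumulative block boundaries. -/
structure BlockData (n : ℕ) where
  r : ℕ
  c : ℕ → ℕ
  k : ℕ → ℕ
  c_zero : c 0 = 0
  c_last : c r = n
  c_lt : ∀ s < r, c s < c (s + 1)
  size_le : ∀ s < r, c (s + 1) ≤ c s + 2

namespace BlockData

variable {n : ℕ} (bd : BlockData n)

/-- `i` belongs to the `s`-th block. -/
def InBlock (s : ℕ) (i : Fin n) : Prop := bd.c s ≤ (i : ℕ) ∧ (i : ℕ) < bd.c (s + 1)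

/-- The size (`deg C_s`) of the `s`-th block. -/
def size (s : ℕ) : ℕ := bd.c (s + 1) - bd.c s

end BlockData

/-- The description of the maximal constant blocks of a non-decreasing sequence `a`:
`Ns` is the sequence of cumulative block lengths `n_s^*` and `ms` the sequence of values. -/
def BlocksOf {n : ℕ} (a : Fin n → ℤ) (r : ℕ) (Ns : ℕ → ℕ) (ms : ℕ → ℤ) : Prop :=
  Ns 0 = 0 ∧ Ns r = n ∧ (∀ s < r, Ns s < Ns (s + 1)) ∧
  (∀ s < r, ∀ i : Fin n, Ns s ≤ (i : ℕ) → (i : ℕ) < Ns (s + 1) → a i = ms s) ∧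
  (∀ s, s + 1 < r → ms s < ms (s + 1))

/-- `(n₁,…,n_r; m₁,…,m_r; ζ₁,…,ζ_r)` (encoded via the cumulative sums `Ns (s+1) = n_{s+1}^*`,
`ms s = m_{s+1}`, `zs s = ζ_{s+1}`) is an EGK datum of length `n` (Definition 4.2). -/
def IsEGKDatum (n r : ℕ) (Ns : ℕ → ℕ) (ms zs : ℕ → ℤ) : Prop :=
  Ns 0 = 0 ∧ Ns r = n ∧ (∀ s < r, Ns s < Ns (s + 1)) ∧
  (∀ s < r, 0 ≤ ms s) ∧ (∀ s, s + 1 < r → ms s < ms (s + 1)) ∧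
  (∀ s < r, zs s = 0 ∨ zs s = 1 ∨ zs s = -1) ∧
  -- (E2)
  (∀ s < r, Even (Ns (s + 1)) →
    (zs s ≠ 0 ↔ Even (∑ u ∈ Finset.range (s + 1), ms u * ((Ns (u + 1) : ℤ) - (Ns u : ℤ))))) ∧
  -- (E3)
  (∀ s < r, ¬ Even (Ns (s + 1)) →
    zs s ≠ 0 ∧
    ((∀ i < s, Even (Ns (i + 1))) →
      zs s = ∏ u ∈ Finset.range s, zs u ^ (ms u + ms (u + 1)).toNat) ∧
    (∀ t < s, ¬ Even (Ns (t + 1)) → (∀ i, t < i → i < s → Even (Ns (i + 1))) →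
      Even ((∑ u ∈ Finset.range s, ms u * ((Ns (u + 1) : ℤ) - (Ns u : ℤ))) +
        ms s * ((Ns (s + 1) : ℤ) - (Ns s : ℤ) - 1)) →
      zs s = zs t * ∏ u ∈ Finset.Ico (t + 1) s, zs u ^ (ms u + ms (u + 1)).toNat))

/-- `(a₁,…,a_n; ε₁,…,ε_n)` is a naive EGK datum of length `n` (Definition 4.1);
the index `i : Fin n` corresponds to the (1-based) index `(i : ℕ) + 1` of the paper. -/
def IsNaiveEGK (n : ℕ) (a ε : Fin n → ℤ) : Prop :=
  (∀ i, 0 ≤ a i) ∧ (∀ i j : Fin n, i ≤ j → a i ≤ a j) ∧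
  (∀ i, ε i = 0 ∨ ε i = 1 ∨ ε i = -1) ∧
  -- (N2)
  (∀ i : Fin n, Even ((i : ℕ) + 1) →
    (ε i ≠ 0 ↔ Even (∑ j ∈ Finset.univ.filter (fun j : Fin n => j ≤ i), a j))) ∧
  -- (N3)
  (∀ i : Fin n, ¬ Even ((i : ℕ) + 1) → ε i ≠ 0) ∧
  -- (N4)
  (∀ h : 0 < n, ε ⟨0, h⟩ = 1) ∧
  -- (N5)
  (∀ i : Fin n, 2 ≤ (i : ℕ) → ¬ Even ((i : ℕ) + 1) →
    Even (∑ j ∈ Finset.univ.filter (fun j : Fin n => j < i), a j) →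
    ∀ (h2 : (i : ℕ) - 2 < n) (h1 : (i : ℕ) - 1 < n),
      ε i = ε ⟨(i : ℕ) - 2, h2⟩ * ε ⟨(i : ℕ) - 1, h1⟩ ^ (a i + a ⟨(i : ℕ) - 1, h1⟩).toNat)

/-- `Υ(a₁,…,a_n; ε₁,…,ε_n) = (n₁,…,n_r; m₁,…,m_r; ζ₁,…,ζ_r)` (encoded via cumulative
block lengths `Ns`). -/
def UpsilonRel (n : ℕ) (a ε : Fin n → ℤ) (r : ℕ) (Ns : ℕ → ℕ) (ms zs : ℕ → ℤ) : Prop :=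
  BlocksOf a r Ns ms ∧
  (∀ s < r, ∀ h : Ns (s + 1) - 1 < n, zs s = ε ⟨Ns (s + 1) - 1, h⟩)

/-- The Hilbert symbol `⟨a, b⟩ ∈ {±1}`. -/
def hilbertSym {F : Type*} [Field F] (a b : F) : ℤ :=
  if ∃ x y : F, a * x ^ 2 + b * y ^ 2 = 1 then 1 else -1

/-- `e` is the Clifford invariant `η_B` of `B` (Definition 1.4), computed via a
`GL_n(F)`-diagonalization of `B`. -/
def IsCliffordInv {F : Type*} [Field F] {n : ℕ} (B : Matrix (Fin n) (Fin n) F) (e : ℤ) :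
    Prop :=
  ∃ (P : Matrix (Fin n) (Fin n) F) (d : Fin n → F),
    IsUnit P.det ∧ Pᵀ * B * P = Matrix.diagonal d ∧
    e = hilbertSym (-1) (-1 : F) ^ ((n + 1) / 4) * hilbertSym (-1) B.det ^ ((n - 1) / 2) *
      ∏ j : Fin n, ∏ i ∈ Finset.univ.filter (fun i : Fin n => i < j), hilbertSym (d i) (d j)

namespace LocalFieldData

variable {F : Type*} [Field F] (v : LocalFieldData F)

/-- `x` lies in the ring of integers `𝔬`. -/
def Integer (x : F) : Prop := 0 ≤ v.ord x

/-- `ord` as an integer-valued function (junk value `0` at `x = 0`). -/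
def ordZ (x : F) : ℤ := (v.ord x).untopD 0

/-- `U ∈ GL_n(𝔬)`. -/
def IsUnimodular {n : ℕ} (U : Matrix (Fin n) (Fin n) F) : Prop :=
  (∀ i j, v.Integer (U i j)) ∧ v.ord U.det = 0

/-- `B` and `B'` are `GL_n(𝔬)`-equivalent. -/
def Equivalent {n : ℕ} (B B' : Matrix (Fin n) (Fin n) F) : Prop :=
  ∃ U : Matrix (Fin n) (Fin n) F, v.IsUnimodular U ∧ B' = Uᵀ * B * U

/-- `B ∈ ℋ_n(𝔬)`: a half-integral symmetric matrix. -/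
def IsHalfIntegral {n : ℕ} (B : Matrix (Fin n) (Fin n) F) : Prop :=
  B.IsSymm ∧ (∀ i, v.Integer (B i i)) ∧ ∀ i j, v.Integer (2 * B i j)

/-- `B ∈ 𝓜(a)`: `ord(b_ii) ≥ a_i` and `ord(2 b_ij) ≥ (a_i + a_j)/2`. -/
def MemM {n : ℕ} (B : Matrix (Fin n) (Fin n) F) (a : Fin n → ℤ) : Prop :=
  (∀ i, (a i : WithTop ℤ) ≤ v.ord (B i i)) ∧
  ∀ i j, ((a i + a j : ℤ) : WithTop ℤ) ≤ v.ord (2 * B i j) + v.ord (2 * B i j)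

/-- `a ∈ S(B)`. -/
def MemS {n : ℕ} (B : Matrix (Fin n) (Fin n) F) (a : Fin n → ℤ) : Prop :=
  (∀ i, 0 ≤ a i) ∧ (∀ i j : Fin n, i ≤ j → a i ≤ a j) ∧ v.MemM B a

/-- `a ∈ 𝐒({B})`. -/
def MemSS {n : ℕ} (B : Matrix (Fin n) (Fin n) F) (a : Fin n → ℤ) : Prop :=
  ∃ U : Matrix (Fin n) (Fin n) F, v.IsUnimodular U ∧ v.MemS (Uᵀ * B * U) a

/-- `a` is the Gross–Keating invariant of `B`: the greatest element of `𝐒({B})` in the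
lexicographic order. -/
def IsGK {n : ℕ} (B : Matrix (Fin n) (Fin n) F) (a : Fin n → ℤ) : Prop :=
  v.MemSS B a ∧ ∀ b : Fin n → ℤ, v.MemSS B b → lexLE b a

/-- `B` is optimal: `GK(B) ∈ S(B)`. -/
def IsOptimal {n : ℕ} (B : Matrix (Fin n) (Fin n) F) : Prop :=
  ∃ a : Fin n → ℤ, v.IsGK B a ∧ v.MemS B a

/-- Membership condition for the group `G_a`:
`ord(g_ij) ≥ (a_j - a_i)/2` whenever `a_i < a_j`. -/
def GCond {n : ℕ} (a : Fin n → ℤ) (g : Matrix (Fin n) (Fin n) F) : Prop :=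
  ∀ i j : Fin n, a i < a j → ((a j - a i : ℤ) : WithTop ℤ) ≤ v.ord (g i j) + v.ord (g i j)

/-- `F(√d)/F` is a quadratic unramified extension, characterized via local class field
theory: `d` is not a square, and every unit of `𝔬` is a norm from `F(√d)`. -/
def UnramifiedQuadratic (d : F) : Prop :=
  ¬ IsSq d ∧ ∀ x : F, v.ord x = 0 → ∃ a b : F, x = a ^ 2 - d * b ^ 2

/-- `ξ_B ∈ {1, -1, 0}` according as `D_B` is a square, `F(√D_B)/F` is unramified quadratic,
or `F(√D_B)/F` is ramified. -/
def xi {n : ℕ} (B : Matrix (Fin n) (Fin n) F) : ℤ :=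
  if IsSq (DB B) then 1 else if v.UnramifiedQuadratic (DB B) then -1 else 0

/-- `ord 𝔇` for the quadratic extension `F(√d)/F`: the minimal valuation of the
discriminant `4 y² d` of an integral generator `x + y √d` of `F[√d]`. -/
def discOrd (d : F) : ℤ :=
  sInf {m : ℤ | ∃ x y : F, v.Integer (2 * x) ∧ v.Integer (x ^ 2 - d * y ^ 2) ∧
    v.ord (4 * y ^ 2 * d) = (m : WithTop ℤ)}

/-- `Δ(B)` (Definition 1.3). -/
def Delta {n : ℕ} (B : Matrix (Fin n) (Fin n) F) : ℤ :=
  if Even n then v.ordZ (DB B) - v.discOrd (DB B) + 1 - (v.xi B) ^ 2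
  else v.ordZ (DB B)

/-- `B` is a reduced form of GK-type `(a, σ)` (Definition 1.8). -/
def IsReducedForm {n : ℕ} (B : Matrix (Fin n) (Fin n) F) (a : Fin n → ℤ)
    (σ : Equiv.Perm (Fin n)) : Prop :=
  v.MemM B a ∧
  -- (1)
  (∀ i : Fin n, σ i ≠ i →
    v.ord (2 * B i (σ i)) + v.ord (2 * B i (σ i)) = ((a i + a (σ i) : ℤ) : WithTop ℤ)) ∧
  (∀ i : Fin n, a i < a (σ i) → v.ord (B i i) = (a i : WithTop ℤ)) ∧
  -- (2)
  (∀ i : Fin n, σ i = i → v.ord (B i i) = (a i : WithTop ℤ)) ∧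
  -- (3)
  (∀ i j : Fin n, j ≠ i → j ≠ σ i →
    ((a i + a j : ℤ) : WithTop ℤ) < v.ord (2 * B i j) + v.ord (2 * B i j))

/-- The `s`-th block of `B` is `2^{k_s} C_s` with `C_s` a unimodular diagonal matrix. -/
def DiagBlock {n : ℕ} (B : Matrix (Fin n) (Fin n) F) (bd : BlockData n) (s : ℕ) : Prop :=
  ∀ i j : Fin n, bd.InBlock s i → bd.InBlock s j →
    (i = j → v.ord (B i i) = ((bd.k s : ℤ) : WithTop ℤ)) ∧ (i ≠ j → B i j = 0)

/-- The `s`-th block of `B` is `2^{k_s} C_s` with `C_s ∈ ½(S₂(𝔬)_e ∩ GL₂(𝔬))`. -/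
def EvenBlock {n : ℕ} (B : Matrix (Fin n) (Fin n) F) (bd : BlockData n) (s : ℕ) : Prop :=
  bd.c (s + 1) = bd.c s + 2 ∧
  ∀ i j : Fin n, bd.InBlock s i → bd.InBlock s j →
    (i = j → ((bd.k s : ℤ) : WithTop ℤ) ≤ v.ord (B i i)) ∧
    (i ≠ j → v.ord (2 * B i j) = ((bd.k s : ℤ) : WithTop ℤ))

/-- `B = 2^{k₁}C₁ ⊥ ⋯ ⊥ 2^{k_r}C_r` is a pre-optimal form (Definition 2.2), with the
block decomposition recorded by `bd`. -/
def IsPreOptimal {n : ℕ} (B : Matrix (Fin n) (Fin n) F) (bd : BlockData n) : Prop :=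
  v.IsHalfIntegral B ∧ B.det ≠ 0 ∧
  (∀ s t : ℕ, s < bd.r → t < bd.r → s ≠ t →
    ∀ i j : Fin n, bd.InBlock s i → bd.InBlock t j → B i j = 0) ∧
  (∀ s < bd.r, v.DiagBlock B bd s ∨ v.EvenBlock B bd s) ∧
  -- (PO1): `Σ_{j ∈ 𝒟_m} deg C_j ≤ 2`
  (∀ s t : ℕ, s < bd.r → t < bd.r → s ≠ t → v.DiagBlock B bd s → v.DiagBlock B bd t →
    bd.k s = bd.k t → bd.size s + bd.size t ≤ 2) ∧
  (∀ s t u : ℕ, s < bd.r → t < bd.r → u < bd.r → s ≠ t → s ≠ u → t ≠ u →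
    v.DiagBlock B bd s → v.DiagBlock B bd t → v.DiagBlock B bd u →
    bd.k s = bd.k t → bd.k t = bd.k u → False) ∧
  -- (PO1): `ℰ_m` is a set of consecutive integers
  (∀ s t u : ℕ, s ≤ t → t ≤ u → u < bd.r → v.EvenBlock B bd s → v.EvenBlock B bd u →
    bd.k s = bd.k u → v.EvenBlock B bd t ∧ bd.k t = bd.k s) ∧
  -- (PO2)
  (∀ s t : ℕ, s < t → t < bd.r →
    (v.DiagBlock B bd s → v.DiagBlock B bd t → bd.k s ≤ bd.k t) ∧
    (v.EvenBlock B bd s → v.EvenBlock B bd t → bd.k s ≤ bd.k t) ∧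
    (v.DiagBlock B bd s → v.EvenBlock B bd t → bd.k s + 1 ≤ bd.k t) ∧
    (v.EvenBlock B bd s → v.DiagBlock B bd t → bd.k s ≤ bd.k t + 1)) ∧
  -- (PO3)
  (∀ s < bd.r, v.DiagBlock B bd s → bd.size s = 2 →
    1 ≤ s ∧
    ((Even (bd.c (s + 1)) ∧ v.xi (upperLeft B (bd.c s)) = 0 ∧
        v.xi (upperLeft B (bd.c (s + 1))) = 0) ∨
      (Odd (bd.c s) ∧ Even (v.ordZ (Matrix.det (upperLeft B (bd.c s))) + (bd.k s : ℤ))))) ∧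
  -- (PO4)
  (∀ s < bd.r, 1 ≤ s → bd.k (s - 1) = bd.k s + 1 → v.DiagBlock B bd s →
    v.EvenBlock B bd (s - 1) →
    bd.size s = 2 ∨
      (bd.size s = 1 ∧
        ((Even (bd.c (s + 1)) ∧ Even (v.ordZ (Matrix.det (upperLeft B (bd.c (s + 1)))))) ∨
          (Odd (bd.c (s + 1)) ∧ v.xi (upperLeft B (bd.c s)) = 0)))) ∧
  -- (PO5)
  (∀ s : ℕ, s + 1 < bd.r → v.DiagBlock B bd s → v.EvenBlock B bd (s + 1) →
    bd.k (s + 1) = bd.k s + 1 →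
    bd.size s = 1 ∧
      ((Even (bd.c (s + 1)) ∧ Odd (v.ordZ (Matrix.det (upperLeft B (bd.c (s + 1)))))) ∨
        (Odd (bd.c (s + 1)) ∧ (1 ≤ s → v.xi (upperLeft B (bd.c s)) ≠ 0)))) ∧
  -- (PO6)
  (∀ s : ℕ, s + 1 < bd.r → Even (bd.c (s + 1)) → v.DiagBlock B bd s →
    v.DiagBlock B bd (s + 1) → bd.k (s + 1) = bd.k s + 1 →
    v.xi (upperLeft B (bd.c (s + 1))) = 0)

/-- The statement of Theorem 3.1 at the `s`-th block of a pre-optimal form `B`, for the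
(0-indexed) sequence `aN` of entries of `GK(B)`. -/
def GKFormulaAt {n : ℕ} (B : Matrix (Fin n) (Fin n) F) (bd : BlockData n)
    (aN : ℕ → ℤ) (s : ℕ) : Prop :=
  -- (1)
  (v.EvenBlock B bd s →
    aN (bd.c (s + 1) - 2) = (bd.k s : ℤ) ∧ aN (bd.c (s + 1) - 1) = (bd.k s : ℤ)) ∧
  -- (2)
  (v.DiagBlock B bd s → bd.size s = 1 →
    -- (2.1)
    (Odd (bd.c (s + 1)) →
      (Odd (v.ordZ (Matrix.det (upperLeft B (bd.c s)))) →
        aN (bd.c (s + 1) - 1) = (bd.k s : ℤ) + 2) ∧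
      (Even (v.ordZ (Matrix.det (upperLeft B (bd.c s)))) → v.xi (upperLeft B (bd.c s)) = 0 →
        aN (bd.c (s + 1) - 1) = (bd.k s : ℤ) + 1) ∧
      (v.xi (upperLeft B (bd.c s)) ≠ 0 → aN (bd.c (s + 1) - 1) = (bd.k s : ℤ))) ∧
    -- (2.2)
    (Even (bd.c (s + 1)) →
      (Odd (v.ordZ (Matrix.det (upperLeft B (bd.c (s + 1))))) →
        aN (bd.c (s + 1) - 1) = (bd.k s : ℤ)) ∧
      (Even (v.ordZ (Matrix.det (upperLeft B (bd.c (s + 1))))) →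
        v.xi (upperLeft B (bd.c (s + 1))) = 0 →
        aN (bd.c (s + 1) - 1) = (bd.k s : ℤ) + 1) ∧
      (v.xi (upperLeft B (bd.c (s + 1))) ≠ 0 → aN (bd.c (s + 1) - 1) = (bd.k s : ℤ) + 2))) ∧
  -- (3)
  (v.DiagBlock B bd s → bd.size s = 2 →
    aN (bd.c (s + 1) - 2) = (bd.k s : ℤ) + 1 ∧ aN (bd.c (s + 1) - 1) = (bd.k s : ℤ) + 1)

/-- `(n₁,…,n_r; m₁,…,m_r; ζ₁,…,ζ_r)` (encoded via cumulative block lengths `Ns`) is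
the extended Gross–Keating datum `EGK(B)` of `B` (Definition 1.5), computed from an
optimal form `B'` equivalent to `B`. -/
def IsEGK {n : ℕ} (B : Matrix (Fin n) (Fin n) F) (r : ℕ) (Ns : ℕ → ℕ) (ms zs : ℕ → ℤ) :
    Prop :=
  ∃ B' : Matrix (Fin n) (Fin n) F, v.Equivalent B B' ∧
    ∃ a : Fin n → ℤ, v.IsGK B' a ∧ v.MemS B' a ∧ BlocksOf a r Ns ms ∧
      ∀ s < r, (Even (Ns (s + 1)) → zs s = v.xi (upperLeft B' (Ns (s + 1)))) ∧
        (¬ Even (Ns (s + 1)) → IsCliffordInv (upperLeft B' (Ns (s + 1))) (zs s))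

end LocalFieldData





namespace UpsilonAux

def psum (n : ℕ) (a : Fin n → ℤ) (k : ℕ) : ℤ :=
  ∑ j ∈ Finset.univ.filter (fun j : Fin n => (j : ℕ) < k), a j

lemma fin_congr {n : ℕ} (f : Fin n → ℤ) {x y : ℕ} (e : x = y) (hx : x < n) (hy : y < n) :
    f ⟨x, hx⟩ = f ⟨y, hy⟩ := by subst e; rfl

lemma psum_zero {n : ℕ} (a : Fin n → ℤ) : psum n a 0 = 0 := by
  simp [psum]

lemma psum_succ {n : ℕ} (a : Fin n → ℤ) (k : ℕ) (hk : k < n) :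
    psum n a (k + 1) = psum n a k + a ⟨k, hk⟩ := by
  have h : Finset.univ.filter (fun j : Fin n => (j : ℕ) < k + 1)
      = insert ⟨k, hk⟩ (Finset.univ.filter (fun j : Fin n => (j : ℕ) < k)) := by
    ext j
    simp only [Finset.mem_filter, Finset.mem_univ, true_and, Finset.mem_insert, Fin.ext_iff]
    omega
  rw [psum, h, Finset.sum_insert (by simp)]
  rw [psum]; ring

lemma psum_const_add {n : ℕ} (a : Fin n → ℤ) (c d : ℕ) (hcd : c + d ≤ n) (m : ℤ)
    (hconst : ∀ (j : ℕ) (hj : j < n), c ≤ j → j < c + d → a ⟨j, hj⟩ = m) :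
    psum n a (c + d) = psum n a c + d * m := by
  induction d with
  | zero => simp
  | succ d ih =>
    have hd : c + d < n := by omega
    rw [show c + (d + 1) = (c + d) + 1 from by ring, psum_succ a (c + d) hd,
      ih (by omega) (fun j hj h1 h2 => hconst j hj h1 (by omega)),
      hconst (c + d) hd (by omega) (by omega)]
    push_cast; ring

lemma filter_le_sum {n : ℕ} (a : Fin n → ℤ) (i : Fin n) :
    ∑ j ∈ Finset.univ.filter (fun j : Fin n => j ≤ i), a j = psum n a ((i : ℕ) + 1) := by
  rw [psum]
  congr 1
  ext j
  simp only [Finset.mem_filter, Finset.mem_univ, true_and, Fin.le_def]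
  omega

lemma filter_lt_sum {n : ℕ} (a : Fin n → ℤ) (i : Fin n) :
    ∑ j ∈ Finset.univ.filter (fun j : Fin n => j < i), a j = psum n a (i : ℕ) := by
  rfl

section naive

variable {n : ℕ} {a ε : Fin n → ℤ}

lemma eps_sq (h : IsNaiveEGK n a ε) (i : Fin n) (hne : ε i ≠ 0) {k : ℕ} (hk : Even k) :
    ε i ^ k = 1 := by
  rcases h.2.2.1 i with h0 | h1 | h2
  · exact absurd h0 hne
  · rw [h1, one_pow]
  · rw [h2, Even.neg_one_pow hk]

lemma N2' (h : IsNaiveEGK n a ε) (p : ℕ) (hp : p < n) (hodd : ¬ Even p) :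
    (ε ⟨p, hp⟩ ≠ 0 ↔ Even (psum n a (p + 1))) := by
  have he : Even (((⟨p, hp⟩ : Fin n) : ℕ) + 1) := by
    simp only [Fin.val_mk, Nat.even_iff] at *
    omega
  have := h.2.2.2.1 ⟨p, hp⟩ he
  rwa [filter_le_sum] at this

lemma N5' (h : IsNaiveEGK n a ε) (p : ℕ) (hp : p + 2 < n) (hpe : Even p)
    (hS : Even (psum n a (p + 2))) (hp0 : p < n) (hp1 : p + 1 < n) :
    ε ⟨p + 2, hp⟩ = ε ⟨p, hp0⟩ *
      ε ⟨p + 1, hp1⟩ ^ (a ⟨p + 2, hp⟩ + a ⟨p + 1, hp1⟩).toNat := by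
  have hodd : ¬ Even (((⟨p + 2, hp⟩ : Fin n) : ℕ) + 1) := by
    simp only [Fin.val_mk, Nat.even_iff] at *
    omega
  have hfl : Even (∑ j ∈ Finset.univ.filter (fun j : Fin n => j < (⟨p + 2, hp⟩ : Fin n)), a j) := by
    rwa [filter_lt_sum]
  have h5 := h.2.2.2.2.2.2 ⟨p + 2, hp⟩ (by simp) hodd hfl (by simp; omega) (by simp; omega)
  rw [h5, fin_congr ε (show ((⟨p + 2, hp⟩ : Fin n) : ℕ) - 2 = p from by simp) _ hp0,
    fin_congr ε (show ((⟨p + 2, hp⟩ : Fin n) : ℕ) - 1 = p + 1 from by simp) _ hp1,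
    fin_congr a (show ((⟨p + 2, hp⟩ : Fin n) : ℕ) - 1 = p + 1 from by simp) _ hp1]




lemma chain_const (h : IsNaiveEGK n a ε) (c : ℕ) (hcn : c < n) (hc : Even c)
    (hPc : Even (psum n a c)) :
    ∀ (k : ℕ) (hk : c + 2 * k < n),
      (∀ (j : ℕ) (hj : j < n), c ≤ j → j ≤ c + 2 * k → a ⟨j, hj⟩ = a ⟨c, hcn⟩) →
      ε ⟨c + 2 * k, hk⟩ = ε ⟨c, hcn⟩ := by
  intro k
  induction k with
  | zero =>
    intro hk _
    exact fin_congr ε (by omega) hk hcn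
  | succ k ih =>
    intro hk hconst
    have hk2 : c + 2 * k + 2 < n := by omega
    have hk1 : c + 2 * k + 1 < n := by omega
    have hk0 : c + 2 * k < n := by omega
    have hmnn : 0 ≤ a ⟨c, hcn⟩ := h.1 _
    have hP2 : Even (psum n a (c + 2 * k + 2)) := by
      have heq := psum_const_add a c (2 * k + 2) (by omega) (a ⟨c, hcn⟩)
        (fun j hj h1 h2 => hconst j hj h1 (by omega))
      rw [show c + 2 * k + 2 = c + (2 * k + 2) from by ring, heq]
      exact hPc.add ⟨(k + 1) * a ⟨c, hcn⟩, by push_cast; ring⟩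
    have hstep := N5' h (c + 2 * k) hk2
      (by simp only [Nat.even_iff] at hc ⊢; omega) hP2 hk0 hk1
    have hmid : ε ⟨c + 2 * k + 1, hk1⟩ ≠ 0 := by
      rw [N2' h (c + 2 * k + 1) hk1 (by simp only [Nat.even_iff] at hc ⊢; omega)]
      exact hP2
    have ha1 : a ⟨c + 2 * k + 2, hk2⟩ = a ⟨c, hcn⟩ := hconst _ _ (by omega) (by omega)
    have ha2 : a ⟨c + 2 * k + 1, hk1⟩ = a ⟨c, hcn⟩ := hconst _ _ (by omega) (by omega)
    have hexp : Even (a ⟨c + 2 * k + 2, hk2⟩ + a ⟨c + 2 * k + 1, hk1⟩).toNat := by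
      rw [ha1, ha2]
      exact ⟨(a ⟨c, hcn⟩).toNat, by omega⟩
    rw [fin_congr ε (show c + 2 * (k + 1) = c + 2 * k + 2 from by ring) hk hk2, hstep,
      eps_sq h _ hmid hexp, mul_one]
    exact ih hk0 (fun j hj h1 h2 => hconst j hj h1 (by omega))





lemma odd_block (h : IsNaiveEGK n a ε) (b k : ℕ) (hb : ¬ Even b)
    (hlt : b + 1 + 2 * k < n) (hbn : b < n)
    (hconst : ∀ (j : ℕ) (hj : j < n), b ≤ j → j ≤ b + 1 + 2 * k → a ⟨j, hj⟩ = a ⟨b, hbn⟩)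
    (hP : Even (psum n a (b + 1))) (hb1 : b - 1 < n) :
    ε ⟨b + 1 + 2 * k, hlt⟩ = ε ⟨b - 1, hb1⟩ := by
  have hb1' : 1 ≤ b := by simp only [Nat.even_iff] at hb; omega
  have hbe : Even (b + 1) := by simp only [Nat.even_iff] at hb ⊢; omega
  have hbn1 : b + 1 < n := by omega
  have hbm2 : b - 1 + 2 < n := by omega
  have hbm1n : b - 1 + 1 < n := by omega
  have hchain : ε ⟨b + 1 + 2 * k, hlt⟩ = ε ⟨b + 1, hbn1⟩ := by
    exact chain_const h (b + 1) hbn1 hbe hP k hlt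
      (fun j hj h1 h2 => by
        rw [hconst j hj (by omega) (by omega), hconst (b + 1) hbn1 (by omega) (by omega)])
  have hbm1 : Even (b - 1) := by simp only [Nat.even_iff] at hb ⊢; omega
  have hstep := N5' h (b - 1) hbm2 hbm1
    (by rw [show b - 1 + 2 = b + 1 from by omega]; exact hP) hb1 hbm1n
  have hmid : ε ⟨b - 1 + 1, hbm1n⟩ ≠ 0 := by
    rw [N2' h (b - 1 + 1) hbm1n (by simp only [Nat.even_iff] at hb ⊢; omega)]
    rw [show b - 1 + 1 + 1 = b + 1 from by omega]
    exact hP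
  have ha1 : a ⟨b - 1 + 2, hbm2⟩ = a ⟨b, hbn⟩ := by
    rw [fin_congr a (show b - 1 + 2 = b + 1 from by omega) hbm2 hbn1]
    exact hconst (b + 1) hbn1 (by omega) (by omega)
  have ha2 : a ⟨b - 1 + 1, hbm1n⟩ = a ⟨b, hbn⟩ :=
    fin_congr a (show b - 1 + 1 = b from by omega) hbm1n hbn
  have hexp : Even (a ⟨b - 1 + 2, hbm2⟩ + a ⟨b - 1 + 1, hbm1n⟩).toNat := by
    rw [ha1, ha2]
    exact ⟨(a ⟨b, hbn⟩).toNat, by have := h.1 (⟨b, hbn⟩ : Fin n); omega⟩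
  rw [hchain, fin_congr ε (show b + 1 = b - 1 + 2 from by omega) hbn1 hbm2,
    hstep, eps_sq h _ hmid hexp, mul_one]


end naive

section blocks

variable {n : ℕ} {a ε : Fin n → ℤ} {r : ℕ} {Ns : ℕ → ℕ} {ms zs : ℕ → ℤ}

lemma Ns_mono (bo : BlocksOf a r Ns ms) : ∀ (d u : ℕ), u + d ≤ r → Ns u ≤ Ns (u + d) := by
  intro d
  induction d with
  | zero => intro u _; exact le_rfl
  | succ d ih =>
    intro u hu
    have h1 := ih u (by omega)
    have h2 := bo.2.2.1 (u + d) (by omega)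
    exact le_trans h1 (Nat.le_of_lt h2)

lemma Ns_mono' (bo : BlocksOf a r Ns ms) {u v : ℕ} (huv : u ≤ v) (hv : v ≤ r) :
    Ns u ≤ Ns v := by
  have := Ns_mono bo (v - u) u (by omega)
  rwa [show u + (v - u) = v from by omega] at this

lemma Ns_le_n (bo : BlocksOf a r Ns ms) {s : ℕ} (hs : s ≤ r) : Ns s ≤ n := by
  have := Ns_mono' bo hs le_rfl
  rwa [bo.2.1] at this

lemma a_block (bo : BlocksOf a r Ns ms) {s : ℕ} (hs : s < r) (j : ℕ) (hj : j < n)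
    (h1 : Ns s ≤ j) (h2 : j < Ns (s + 1)) : a ⟨j, hj⟩ = ms s :=
  bo.2.2.2.1 s hs ⟨j, hj⟩ h1 h2

lemma psum_blocksum (bo : BlocksOf a r Ns ms) :
    ∀ s ≤ r, psum n a (Ns s) = ∑ u ∈ Finset.range s, ms u * ((Ns (u + 1) : ℤ) - (Ns u : ℤ)) := by
  intro s
  induction s with
  | zero => intro _; simp [bo.1, psum_zero]
  | succ s ih =>
    intro hs
    have hsr : s < r := by omega
    have hle : Ns s ≤ Ns (s + 1) := le_of_lt (bo.2.2.1 s hsr)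
    have hn1 : Ns (s + 1) ≤ n := Ns_le_n bo hs
    have heq := psum_const_add a (Ns s) (Ns (s + 1) - Ns s) (by omega) (ms s)
      (fun j hj h1 h2 => a_block bo hsr j hj h1 (by omega))
    rw [show Ns s + (Ns (s + 1) - Ns s) = Ns (s + 1) from by omega] at heq
    rw [heq, ih (by omega), Finset.sum_range_succ]
    have : ((Ns (s + 1) - Ns s : ℕ) : ℤ) = (Ns (s + 1) : ℤ) - (Ns s : ℤ) := by omega
    rw [this]; ring

/-- The boundary step: crossing from block `w` into block `w+1` at an even boundary. -/
lemma boundary_step (h : IsNaiveEGK n a ε) (hup : UpsilonRel n a ε r Ns ms zs)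
    (w : ℕ) (hw : w + 1 < r) (hCe : Even (Ns (w + 1))) (hP : Even (psum n a (Ns (w + 1))))
    (hC : Ns (w + 1) < n) (hC2 : Ns (w + 1) - 2 < n) :
    ε ⟨Ns (w + 1), hC⟩ = ε ⟨Ns (w + 1) - 2, hC2⟩ * zs w ^ (ms w + ms (w + 1)).toNat := by
  obtain ⟨bo, hz⟩ := hup
  have hlt1 : Ns w < Ns (w + 1) := bo.2.2.1 w (by omega)
  have hlt2 : Ns (w + 1) < Ns (w + 2) := bo.2.2.1 (w + 1) hw
  have hC2' : 2 ≤ Ns (w + 1) := by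
    rcases hCe with ⟨t, ht⟩; omega
  have hCm1 : Ns (w + 1) - 1 < n := by omega
  have hstep := N5' h (Ns (w + 1) - 2) (by omega)
    (by simp only [Nat.even_iff] at hCe ⊢; omega)
    (by rw [show Ns (w + 1) - 2 + 2 = Ns (w + 1) from by omega]; exact hP) hC2 (by omega)
  have e1 : Ns (w + 1) - 2 + 2 = Ns (w + 1) := by omega
  have e2 : Ns (w + 1) - 2 + 1 = Ns (w + 1) - 1 := by omega
  rw [fin_congr ε e1.symm hC (by omega), hstep]
  have haC : a ⟨Ns (w + 1) - 2 + 2, by omega⟩ = ms (w + 1) := by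
    rw [fin_congr a e1 (by omega) hC]
    exact a_block bo hw (Ns (w + 1)) hC le_rfl hlt2
  have haC1 : a ⟨Ns (w + 1) - 2 + 1, by omega⟩ = ms w := by
    rw [fin_congr a e2 (by omega) hCm1]
    exact a_block bo (by omega) (Ns (w + 1) - 1) hCm1 (by omega) (by omega)
  have hzw : ε ⟨Ns (w + 1) - 2 + 1, by omega⟩ = zs w := by
    rw [fin_congr ε e2 (by omega) hCm1]
    exact (hz w (by omega) hCm1).symm
  rw [haC, haC1, hzw, add_comm (ms (w + 1)) (ms w)]

/-- Descending through a run of blocks with even cumulative boundaries. -/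
lemma down (h : IsNaiveEGK n a ε) (hup : UpsilonRel n a ε r Ns ms zs) :
    ∀ (k s : ℕ), s < r → k ≤ s → (∀ u, s - k ≤ u → u ≤ s → Even (Ns u)) →
    Even (psum n a (Ns s)) →
    Even (psum n a (Ns (s - k))) ∧ ∀ (h1 : Ns s < n) (h2 : Ns (s - k) < n),
      ε ⟨Ns s, h1⟩ = ε ⟨Ns (s - k), h2⟩ *
        ∏ u ∈ Finset.Ico (s - k) s, zs u ^ (ms u + ms (u + 1)).toNat := by
  intro k
  induction k with
  | zero =>
    intro s hs _ _ hP
    refine ⟨hP, fun h1 h2 => ?_⟩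
    simp only [Nat.sub_zero] at h2 ⊢
    rw [Finset.Ico_self, Finset.prod_empty, mul_one]
  | succ k ih =>
    intro s hs hks hev hP
    obtain ⟨bo, hz⟩ := hup
    obtain ⟨ihP, ihe⟩ := ih s hs (by omega) (fun u h1 h2 => hev u (by omega) h2) hP
    have hw : s - (k + 1) + 1 = s - k := by omega
    set w := s - (k + 1) with hwdef
    have hwr : w + 1 < r := by omega
    have hws : w < s := by omega
    have hC : Ns (w + 1) < n := by
      have h1 : Ns (w + 1) ≤ Ns s := Ns_mono' bo (by omega) (by omega)
      have h2 : Ns s < Ns (s + 1) := bo.2.2.1 s hs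
      have h3 : Ns (s + 1) ≤ n := Ns_le_n bo (by omega)
      omega
    have hlt1 : Ns w < Ns (w + 1) := bo.2.2.1 w (by omega)
    have hCe : Even (Ns (w + 1)) := by rw [hw]; exact hev (s - k) (by omega) (by omega)
    have hce : Even (Ns w) := hev w (by omega) (by omega)
    have hC2' : Ns w + 2 ≤ Ns (w + 1) := by
      rcases hCe with ⟨x, hx⟩; rcases hce with ⟨y, hy⟩; omega
    have hPC : Even (psum n a (Ns (w + 1))) := by rw [hw]; exact ihP
    -- even psum at Ns w
    have heq := psum_const_add a (Ns w) (Ns (w + 1) - Ns w) (by omega) (ms w)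
      (fun j hj h1 h2 => a_block bo (by omega) j hj h1 (by omega))
    rw [show Ns w + (Ns (w + 1) - Ns w) = Ns (w + 1) from by omega] at heq
    have hdev : Even ((Ns (w + 1) - Ns w : ℕ) : ℤ) := by
      rcases hCe with ⟨x, hx⟩; rcases hce with ⟨y, hy⟩
      exact ⟨(x : ℤ) - (y : ℤ), by omega⟩
    have hPc : Even (psum n a (Ns w)) := by
      have : Even (((Ns (w + 1) - Ns w : ℕ) : ℤ) * ms w) := hdev.mul_right _
      rw [heq] at hPC
      rcases hPC with ⟨x, hx⟩; rcases this with ⟨y, hy⟩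
      exact ⟨x - y, by omega⟩
    refine ⟨hPc, fun h1 h2 => ?_⟩
    -- chain within block w from Ns w to Ns (w+1) - 2
    have hcw : Ns w < n := by omega
    have hC2n : Ns (w + 1) - 2 < n := by omega
    have hchain : ε ⟨Ns (w + 1) - 2, hC2n⟩ = ε ⟨Ns w, hcw⟩ := by
      obtain ⟨kk, hkk⟩ : ∃ kk, Ns (w + 1) - 2 = Ns w + 2 * kk := by
        rcases hCe with ⟨x, hx⟩; rcases hce with ⟨y, hy⟩
        exact ⟨x - y - 1, by omega⟩
      rw [fin_congr ε hkk hC2n (by omega)]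
      exact chain_const h (Ns w) hcw hce hPc kk (by omega)
        (fun j hj hj1 hj2 => by
          rw [a_block bo (by omega) j hj hj1 (by omega),
            a_block bo (by omega) (Ns w) hcw le_rfl hlt1])
    have hbs := boundary_step h ⟨bo, hz⟩ w hwr hCe hPC hC hC2n
    have hsk : s - k = w + 1 := by omega
    have hC' : Ns (s - k) < n := by rw [hsk]; exact hC
    have ih1 := ihe h1 hC'
    simp only [hsk] at ih1
    rw [ih1, hbs, hchain,
      Finset.prod_eq_prod_Ico_succ_bot hws (fun u => zs u ^ (ms u + ms (u + 1)).toNat),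
      mul_assoc]

end blocks

section helpers

variable {n : ℕ} {a ε : Fin n → ℤ} {r : ℕ} {Ns : ℕ → ℕ} {ms zs : ℕ → ℤ}

/-- Propagation within the top block `s`, from `Ns s` to `Ns (s+1) - 1`, when both are even. -/
lemma block_top (h : IsNaiveEGK n a ε) (bo : BlocksOf a r Ns ms) {s : ℕ} (hs : s < r)
    (hse : Even (Ns s)) (hodd : ¬ Even (Ns (s + 1))) (hPs : Even (psum n a (Ns s)))
    (hp : Ns (s + 1) - 1 < n) (hsn : Ns s < n) :
    ε ⟨Ns (s + 1) - 1, hp⟩ = ε ⟨Ns s, hsn⟩ := by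
  have hlt : Ns s < Ns (s + 1) := bo.2.2.1 s hs
  obtain ⟨k, hk⟩ : ∃ k, Ns (s + 1) - 1 = Ns s + 2 * k := by
    have hse' := hse
    simp only [Nat.even_iff] at hse' hodd
    exact ⟨(Ns (s + 1) - 1 - Ns s) / 2, by omega⟩
  rw [fin_congr ε hk hp (by omega)]
  exact chain_const h (Ns s) hsn hse hPs k (by omega)
    (fun j hj h1 h2 => by
      rw [a_block bo hs j hj h1 (by omega), a_block bo hs (Ns s) hsn le_rfl hlt])

/-- Exiting an odd-length block `t+1` (which starts at the odd boundary `Ns (t+1)`)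
downwards: the value of `ε` at an even position `e` of block `t+1` is `zs t`. -/
lemma odd_exit (h : IsNaiveEGK n a ε) (hup : UpsilonRel n a ε r Ns ms zs)
    {t e : ℕ} (ht1r : t + 1 < r) (hbodd : ¬ Even (Ns (t + 1)))
    (he1 : Ns (t + 1) + 1 ≤ e) (he2 : e < Ns (t + 2)) (hen : e < n) (heE : Even e)
    (hPe : Even (psum n a e)) (hbm1 : Ns (t + 1) - 1 < n) :
    ε ⟨e, hen⟩ = zs t := by
  obtain ⟨bo, hz⟩ := hup
  have he2' : e < Ns (t + 1 + 1) := he2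
  set b := Ns (t + 1) with hbdef
  have hbn : b < n := by omega
  obtain ⟨k, hk⟩ : ∃ k, e = b + 1 + 2 * k := by
    simp only [Nat.even_iff] at hbodd heE
    exact ⟨(e - b - 1) / 2, by omega⟩
  have hconst : ∀ (j : ℕ) (hj : j < n), b ≤ j → j ≤ b + 1 + 2 * k → a ⟨j, hj⟩ = a ⟨b, hbn⟩ := by
    intro j hj h1 h2
    rw [a_block bo ht1r j hj h1 (by omega), a_block bo ht1r b hbn le_rfl (by omega)]
  have hPb1 : Even (psum n a (b + 1)) := by
    have heq := psum_const_add a (b + 1) (e - b - 1) (by omega) (ms (t + 1))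
      (fun j hj h1 h2 => a_block bo ht1r j hj (by omega) (by omega))
    rw [show b + 1 + (e - b - 1) = e from by omega] at heq
    have hev2 : Even (((e - b - 1 : ℕ) : ℤ) * ms (t + 1)) := by
      apply Even.mul_right
      have : Even (e - b - 1) := by simp only [Nat.even_iff] at hbodd heE ⊢; omega
      exact (Int.even_coe_nat _).2 this
    rw [heq] at hPe
    rcases hPe with ⟨x, hx⟩; rcases hev2 with ⟨y, hy⟩
    exact ⟨x - y, by omega⟩
  have hob := odd_block h b k hbodd (by omega) hbn hconst hPb1 hbm1
  rw [fin_congr ε hk hen (by omega), hob]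
  exact (hz t (by omega) hbm1).symm

lemma even_prefix (h : IsNaiveEGK n a ε) (bo : BlocksOf a r Ns ms) {s : ℕ} (hs : s ≤ r)
    (hNeven : ∀ u ≤ s, Even (Ns u)) : Even (psum n a (Ns s)) := by
  rw [psum_blocksum bo s hs]
  apply Finset.even_sum
  intro u hu
  simp only [Finset.mem_range] at hu
  apply Even.mul_left
  have h1 := hNeven u (by omega)
  have h2 := hNeven (u + 1) (by omega)
  rcases h1 with ⟨x, hx⟩; rcases h2 with ⟨y, hy⟩
  exact ⟨(y : ℤ) - (x : ℤ), by omega⟩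

end helpers

end UpsilonAux

open UpsilonAux

/-- **Proposition 4.1.** If `H = (a₁,…,a_n; ε₁,…,ε_n)` is a naive EGK datum of length `n`,
then `Υ(H)` is an EGK datum of length `n`. -/
theorem upsilon_isEGKDatum (n : ℕ) (a ε : Fin n → ℤ) (h : IsNaiveEGK n a ε)
    (r : ℕ) (Ns : ℕ → ℕ) (ms zs : ℕ → ℤ) (hups : UpsilonRel n a ε r Ns ms zs) :
    IsEGKDatum n r Ns ms zs := by
  obtain ⟨bo, hz⟩ := hups
  have hboundary : ∀ s < r, Ns s < Ns (s + 1) ∧ Ns (s + 1) ≤ n ∧ Ns (s + 1) - 1 < n := by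
    intro s hs
    have h1 := bo.2.2.1 s hs
    have h2 := Ns_le_n bo (show s + 1 ≤ r from hs)
    exact ⟨h1, h2, by omega⟩
  refine ⟨bo.1, bo.2.1, bo.2.2.1, ?_, bo.2.2.2.2, ?_, ?_, ?_⟩
  · -- 0 ≤ ms s
    intro s hs
    obtain ⟨h1, h2, hpn⟩ := hboundary s hs
    have := a_block bo hs (Ns (s + 1) - 1) hpn (by omega) (by omega)
    rw [← this]
    exact h.1 _
  · -- zs values
    intro s hs
    obtain ⟨h1, h2, hpn⟩ := hboundary s hs
    rw [hz s hs hpn]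
    exact h.2.2.1 _
  · -- (E2)
    intro s hs hEv
    obtain ⟨h1, h2, hpn⟩ := hboundary s hs
    rw [← psum_blocksum bo (s + 1) (by omega), hz s hs hpn]
    have hN2 := N2' h (Ns (s + 1) - 1) hpn
      (by simp only [Nat.even_iff] at hEv ⊢; omega)
    rwa [show Ns (s + 1) - 1 + 1 = Ns (s + 1) from by omega] at hN2
  · -- (E3)
    intro s hs hodd
    obtain ⟨h1, h2, hpn⟩ := hboundary s hs
    have hnpos : 0 < n := by omega
    refine ⟨?_, ?_, ?_⟩
    · -- zs s ≠ 0
      rw [hz s hs hpn]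
      exact h.2.2.2.2.1 ⟨Ns (s + 1) - 1, hpn⟩
        (by simp only [Fin.val_mk, Nat.even_iff] at hodd ⊢; omega)
    · -- (E3) (a)
      intro hall
      have hNeven : ∀ u ≤ s, Even (Ns u) := by
        intro u hu
        match u with
        | 0 => rw [bo.1]; exact Even.zero
        | v + 1 => exact hall v (by omega)
      have hPs : Even (psum n a (Ns s)) := even_prefix h bo (by omega) hNeven
      have hsn : Ns s < n := by omega
      obtain ⟨_, hD⟩ := down h ⟨bo, hz⟩ s s hs le_rfl (fun u hu1 hu2 => hNeven u hu2) hPs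
      have h0n : Ns (s - s) < n := by rw [Nat.sub_self, bo.1]; omega
      have hD' := hD hsn h0n
      simp only [Nat.sub_self] at hD'
      have hz0 : ε ⟨Ns 0, by rw [bo.1]; omega⟩ = 1 := by
        rw [fin_congr ε bo.1 (by rw [bo.1]; omega) hnpos]
        exact h.2.2.2.2.2.1 hnpos
      rw [hz s hs hpn, block_top h bo hs (hNeven s le_rfl) hodd hPs hpn hsn, hD', hz0,
        one_mul, Finset.range_eq_Ico]
    · -- (E3) (b)
      intro t ht htodd hmid hpar
      have ht1 := bo.2.2.1 t (by omega)
      set p := Ns (s + 1) - 1 with hpdef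
      set d := p - Ns s with hddef
      have hd : Ns s + d = p := by omega
      -- the parity hypothesis, as evenness of `psum` at `p`
      have hPp : Even (psum n a p) := by
        have heq := psum_const_add a (Ns s) d (by omega) (ms s)
          (fun j hj hj1 hj2 => a_block bo hs j hj hj1 (by omega))
        rw [hd] at heq
        rw [← psum_blocksum bo s (by omega)] at hpar
        have hcast : (Ns (s + 1) : ℤ) - (Ns s : ℤ) - 1 = (d : ℤ) := by omega
        rw [hcast, mul_comm (ms s) ((d : ℕ) : ℤ)] at hpar
        rw [heq]
        rcases hpar with ⟨x, hx⟩
        exact ⟨x, by omega⟩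
      have hpE : Even p := by
        have h2 := hodd
        simp only [Nat.even_iff] at h2 ⊢
        omega
      by_cases hts : t + 1 = s
      · -- adjacent case: the odd block is block `s` itself
        have hNst : Ns (t + 1) = Ns s := by rw [hts]
        have hbodd : ¬ Even (Ns s) := by rw [← hNst]; exact htodd
        have he1 : Ns (t + 1) + 1 ≤ p := by
          have h1 := hbodd
          simp only [Nat.even_iff] at h1
          rcases hpE with ⟨x, hx⟩
          omega
        have he2 : p < Ns (t + 2) := by
          rw [show t + 2 = s + 1 from by omega]
          omega
        have hexit := odd_exit h ⟨bo, hz⟩ (show t + 1 < r from by omega)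
          htodd he1 he2 hpn hpE hPp (by omega)
        rw [hz s hs hpn, hexit, hts, Finset.Ico_self, Finset.prod_empty, mul_one]
      · -- there are even blocks between `t+1` and `s`
        have hts' : t + 1 < s := by omega
        have hse : Even (Ns s) := by
          have := hmid (s - 1) (by omega) (by omega)
          rwa [show s - 1 + 1 = s from by omega] at this
        have hsn : Ns s < n := by omega
        have hdE : Even d := by
          rcases hse with ⟨x, hx⟩; rcases hpE with ⟨y, hy⟩
          exact ⟨y - x, by omega⟩
        have heq := psum_const_add a (Ns s) d (by omega) (ms s)
          (fun j hj hj1 hj2 => a_block bo hs j hj hj1 (by omega))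
        rw [hd] at heq
        have hPs : Even (psum n a (Ns s)) := by
          have hev2 : Even ((d : ℤ) * ms s) :=
            Even.mul_right ((Int.even_coe_nat _).2 hdE) _
          rw [heq] at hPp
          rcases hPp with ⟨x, hx⟩; rcases hev2 with ⟨y, hy⟩
          exact ⟨x - y, by omega⟩
        have htop : ε ⟨p, hpn⟩ = ε ⟨Ns s, hsn⟩ := block_top h bo hs hse hodd hPs hpn hsn
        have heven' : ∀ u, s - (s - (t + 2)) ≤ u → u ≤ s → Even (Ns u) := by
          intro u hu1 hu2
          have := hmid (u - 1) (by omega) (by omega)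
          rwa [show u - 1 + 1 = u from by omega] at this
        obtain ⟨hPt2, hD⟩ := down h ⟨bo, hz⟩ (s - (t + 2)) s hs (by omega) heven' hPs
        have hst2 : s - (s - (t + 2)) = t + 2 := by omega
        rw [hst2] at hPt2 hD
        have ht2n : Ns (t + 2) < n := by
          have := Ns_mono' bo (show t + 2 ≤ s from by omega) (by omega)
          omega
        have hD' := hD hsn ht2n
        have hCe : Even (Ns (t + 2)) := by
          have := hmid (t + 1) (by omega) (by omega)
          rwa [show t + 1 + 1 = t + 2 from rfl] at this
        have hbC : Ns (t + 1) < Ns (t + 2) := bo.2.2.1 (t + 1) (by omega)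
        have hC2n : Ns (t + 2) - 2 < n := by omega
        have hbs : ε ⟨Ns (t + 2), ht2n⟩ = ε ⟨Ns (t + 2) - 2, hC2n⟩ *
            zs (t + 1) ^ (ms (t + 1) + ms (t + 2)).toNat :=
          boundary_step h ⟨bo, hz⟩ (t + 1) (by omega) hCe hPt2 ht2n hC2n
        have hexit : ε ⟨Ns (t + 2) - 2, hC2n⟩ = zs t := by
          by_cases hCb : Ns (t + 2) = Ns (t + 1) + 1
          · rw [fin_congr ε (show Ns (t + 2) - 2 = Ns (t + 1) - 1 from by omega) hC2n (by omega)]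
            exact (hz t (by omega) (by omega)).symm
          · have hge3 : Ns (t + 1) + 3 ≤ Ns (t + 2) := by
              have h1 := htodd; have h2 := hCe
              simp only [Nat.even_iff] at h1 h2
              omega
            have heq2 := psum_const_add a (Ns (t + 2) - 2) 2 (by omega) (ms (t + 1))
              (fun j hj hj1 hj2 =>
                a_block bo (show t + 1 < r from by omega) j hj (by omega)
                  (by rw [show t + 1 + 1 = t + 2 from rfl]; omega))
            rw [show Ns (t + 2) - 2 + 2 = Ns (t + 2) from by omega] at heq2
            have hPe : Even (psum n a (Ns (t + 2) - 2)) := by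
              rw [heq2] at hPt2
              rcases hPt2 with ⟨x, hx⟩
              exact ⟨x - ms (t + 1), by omega⟩
            have heeE : Even (Ns (t + 2) - 2) := by
              rcases hCe with ⟨x, hx⟩; exact ⟨x - 1, by omega⟩
            exact odd_exit h ⟨bo, hz⟩ (show t + 1 < r from by omega) htodd
              (by omega) (by omega) hC2n heeE hPe (by omega)
        rw [hz s hs hpn, htop, hD', hbs, hexit,
          Finset.prod_eq_prod_Ico_succ_bot hts' (fun u => zs u ^ (ms u + ms (u + 1)).toNat)]
        simp only [show t + 1 + 1 = t + 2 from rfl]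
        rw [mul_assoc]


end
end

section
/- The map Υ from naive EGK data of length n to EGK data of length n is surjective: for every EGK datum G = (n₁,…,n_r; m₁,…,m_r; ζ₁,…,ζ_r) of length n there exists a naive EGK datum H of length n with Υ(H) = G. -/
open Matrix
open scoped Classical

noncomputable section

namespace UpsilonAux

def blk (r : ℕ) (Ns : ℕ → ℕ) (i : ℕ) : ℕ := Nat.findGreatest (fun s => Ns s ≤ i) r

def aN (r : ℕ) (Ns : ℕ → ℕ) (ms : ℕ → ℤ) (i : ℕ) : ℤ := ms (blk r Ns i)

def SN (r : ℕ) (Ns : ℕ → ℕ) (ms : ℕ → ℤ) (k : ℕ) : ℤ :=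
  ∑ j ∈ Finset.range k, aN r Ns ms j

def G (Ns : ℕ → ℕ) (ms zs : ℕ → ℤ) : ℕ → ℤ
  | 0 => 1
  | s + 1 => if Even (Ns (s + 1)) then
      G Ns ms zs s * zs s ^ (ms s + ms (s + 1)).toNat
    else zs s

def epsN (r : ℕ) (Ns : ℕ → ℕ) (ms zs : ℕ → ℤ) (i : ℕ) : ℤ :=
  if _h : i = 0 then 1
  else if Even (i + 1) then
    if i + 1 = Ns (blk r Ns i + 1) then zs (blk r Ns i)
    else if Even (SN r Ns ms (i + 1)) then 1 else 0
  else
    if Even (SN r Ns ms i) then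
      epsN r Ns ms zs (i - 2) * epsN r Ns ms zs (i - 1) ^ (aN r Ns ms i + aN r Ns ms (i - 1)).toNat
    else if i + 1 = Ns (blk r Ns i + 1) then zs (blk r Ns i) else 1
termination_by i
decreasing_by all_goals omega


section
variable (n r : ℕ) (Ns : ℕ → ℕ) (ms zs : ℕ → ℤ)

lemma Ns_mono_s13 (h0 : Ns 0 = 0) (h3 : ∀ s < r, Ns s < Ns (s + 1)) :
    ∀ {s t : ℕ}, s ≤ t → t ≤ r → Ns s ≤ Ns t := by
  intro s t hst htr
  induction t with
  | zero => have : s = 0 := by omega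
            simp [this]
  | succ t ih =>
    rcases Nat.lt_or_ge s (t+1) with hl | hl
    · have := h3 t (by omega)
      have := ih (by omega) (by omega)
      omega
    · have : s = t + 1 := by omega
      simp [this]

lemma ms_mono (h5 : ∀ s, s + 1 < r → ms s < ms (s + 1)) :
    ∀ {s t : ℕ}, s ≤ t → t < r → ms s ≤ ms t := by
  intro s t hst htr
  induction t with
  | zero => have : s = 0 := by omega
            simp [this]
  | succ t ih =>
    rcases Nat.lt_or_ge s (t+1) with hl | hl
    · have := h5 t (by omega)
      have := ih (by omega) (by omega)
      omega
    · have : s = t + 1 := by omega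
      simp [this]

lemma blk_le_r (i : ℕ) : blk r Ns i ≤ r := Nat.findGreatest_le r

lemma Ns_blk_le (h0 : Ns 0 = 0) (i : ℕ) : Ns (blk r Ns i) ≤ i := by
  exact Nat.findGreatest_spec (P := fun s => Ns s ≤ i) (Nat.zero_le r) (by omega)

lemma blk_lt_r (h0 : Ns 0 = 0) (h2 : Ns r = n) (i : ℕ) (hi : i < n) : blk r Ns i < r := by
  rcases Nat.lt_or_ge (blk r Ns i) r with h | h
  · exact h
  · have h' : blk r Ns i = r := le_antisymm (blk_le_r r Ns i) h
    have := Ns_blk_le r Ns h0 i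
    rw [h'] at this; omega

lemma lt_Ns_blk_succ (h0 : Ns 0 = 0) (h2 : Ns r = n) (i : ℕ) (hi : i < n) :
    i < Ns (blk r Ns i + 1) := by
  by_contra hc
  push_neg at hc
  have hlt := blk_lt_r n r Ns h0 h2 i hi
  have := Nat.findGreatest_is_greatest (P := fun s => Ns s ≤ i)
    (Nat.lt_succ_self (blk r Ns i)) (by omega)
  exact this hc

lemma blk_eq (h0 : Ns 0 = 0) (h3 : ∀ s < r, Ns s < Ns (s + 1))
    (i s : ℕ) (hs : s < r) (h1 : Ns s ≤ i) (h2 : i < Ns (s + 1)) : blk r Ns i = s := by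
  have hle : s ≤ blk r Ns i := Nat.le_findGreatest (by omega) h1
  rcases Nat.lt_or_ge s (blk r Ns i) with hl | hl
  · exfalso
    have hbr := blk_le_r r Ns i
    have hm : Ns (s + 1) ≤ Ns (blk r Ns i) :=
      Ns_mono_s13 r Ns h0 h3 (by omega) hbr
    have := Ns_blk_le r Ns h0 i
    omega
  · omega

lemma blk_mono (h0 : Ns 0 = 0) {i j : ℕ} (hij : i ≤ j) : blk r Ns i ≤ blk r Ns j := by
  have := Ns_blk_le r Ns h0 i
  exact Nat.le_findGreatest (blk_le_r r Ns i) (by omega)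

lemma aN_in_block (h0 : Ns 0 = 0) (h3 : ∀ s < r, Ns s < Ns (s + 1))
    {i s : ℕ} (hs : s < r) (h1 : Ns s ≤ i) (h2 : i < Ns (s + 1)) :
    aN r Ns ms i = ms s := by
  unfold aN
  rw [blk_eq r Ns h0 h3 i s hs h1 h2]

lemma SN_succ (k : ℕ) : SN r Ns ms (k + 1) = SN r Ns ms k + aN r Ns ms k := by
  unfold SN
  rw [Finset.sum_range_succ]

lemma SN_offset (h0 : Ns 0 = 0) (h3 : ∀ s < r, Ns s < Ns (s + 1))
    {s : ℕ} (hs : s < r) :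
    ∀ t : ℕ, Ns s + t ≤ Ns (s + 1) →
      SN r Ns ms (Ns s + t) = SN r Ns ms (Ns s) + t * ms s := by
  intro t
  induction t with
  | zero => simp
  | succ t ih =>
    intro ht
    have h1 : Ns s + (t + 1) = (Ns s + t) + 1 := by omega
    rw [h1, SN_succ, ih (by omega),
      aN_in_block r Ns ms h0 h3 hs (by omega) (by omega)]
    push_cast
    ring

lemma SN_block (h0 : Ns 0 = 0) (h3 : ∀ s < r, Ns s < Ns (s + 1)) :
    ∀ k ≤ r, SN r Ns ms (Ns k) =
      ∑ u ∈ Finset.range k, ms u * ((Ns (u + 1) : ℤ) - (Ns u : ℤ)) := by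
  intro k
  induction k with
  | zero => intro _; simp [h0, SN]
  | succ k ih =>
    intro hk
    have hlt := h3 k (by omega)
    have h1 : Ns (k + 1) = Ns k + (Ns (k + 1) - Ns k) := by omega
    rw [h1, SN_offset r Ns ms h0 h3 (by omega) _ (by omega), ih (by omega),
      Finset.sum_range_succ]
    have hc : ((Ns (k + 1) - Ns k : ℕ) : ℤ) = (Ns (k + 1) : ℤ) - (Ns k : ℤ) := by omega
    rw [hc]
    ring

lemma G_prod_a (s : ℕ) (he : ∀ i < s, Even (Ns (i + 1))) :
    G Ns ms zs s = ∏ u ∈ Finset.range s, zs u ^ (ms u + ms (u + 1)).toNat := by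
  induction s with
  | zero => simp [G]
  | succ s ih =>
    rw [G, if_pos (he s (by omega)), ih (fun i hi => he i (by omega)),
      Finset.prod_range_succ]

lemma G_prod_b (t s : ℕ) (hts : t < s) (ht : ¬ Even (Ns (t + 1)))
    (he : ∀ i, t < i → i < s → Even (Ns (i + 1))) :
    G Ns ms zs s = zs t * ∏ u ∈ Finset.Ico (t + 1) s, zs u ^ (ms u + ms (u + 1)).toNat := by
  induction s with
  | zero => omega
  | succ s ih =>
    rcases Nat.lt_or_ge t s with hl | hl
    · rw [G, if_pos (he s hl (by omega)), ih hl (fun i h1 h2 => he i h1 (by omega)),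
        Finset.prod_Ico_succ_top (by omega)]
      ring
    · have : t = s := by omega
      subst this
      rw [G, if_neg ht]
      simp

lemma mem3_pow (y : ℤ) (k : ℕ) (hy : y = 0 ∨ y = 1 ∨ y = -1) :
    y ^ k = 0 ∨ y ^ k = 1 ∨ y ^ k = -1 := by
  rcases hy with h | h | h <;> subst h
  · rcases Nat.eq_zero_or_pos k with hk | hk
    · subst hk; norm_num
    · left; exact zero_pow (by omega)
  · norm_num
  · rcases Nat.even_or_odd k with hk | hk
    · right; left; exact hk.neg_one_pow
    · right; right; exact hk.neg_one_pow

lemma mem3_mul (x y : ℤ) (hx : x = 0 ∨ x = 1 ∨ x = -1) (hy : y = 0 ∨ y = 1 ∨ y = -1) :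
    x * y = 0 ∨ x * y = 1 ∨ x * y = -1 := by
  rcases hx with h | h | h <;> rcases hy with h' | h' | h' <;> subst h <;> subst h' <;>
    norm_num

lemma epsN_vals (h0 : Ns 0 = 0) (h2 : Ns r = n)
    (h6 : ∀ s < r, zs s = 0 ∨ zs s = 1 ∨ zs s = -1) :
    ∀ i < n, epsN r Ns ms zs i = 0 ∨ epsN r Ns ms zs i = 1 ∨ epsN r Ns ms zs i = -1 := by
  intro i
  induction i using Nat.strong_induction_on with
  | _ i ih =>
    intro hi
    rw [epsN]
    split_ifs with hA hB hC hD hE hF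
    · norm_num
    · exact h6 _ (blk_lt_r n r Ns h0 h2 i hi)
    · norm_num
    · norm_num
    · exact mem3_mul _ _ (ih (i - 2) (by omega) (by omega))
        (mem3_pow _ _ (ih (i - 1) (by omega) (by omega)))
    · exact h6 _ (blk_lt_r n r Ns h0 h2 i hi)
    · norm_num

lemma eps_even_ne (h0 : Ns 0 = 0) (h2 : Ns r = n) (h3 : ∀ s < r, Ns s < Ns (s + 1))
    (h7 : ∀ s < r, Even (Ns (s + 1)) →
      (zs s ≠ 0 ↔ Even (∑ u ∈ Finset.range (s + 1), ms u * ((Ns (u + 1) : ℤ) - (Ns u : ℤ))))) :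
    ∀ i < n, Even (i + 1) →
      (epsN r Ns ms zs i ≠ 0 ↔ Even (SN r Ns ms (i + 1))) := by
  intro i hi hev
  have hi0 : i ≠ 0 := by rintro rfl; simp at hev
  rw [epsN, dif_neg hi0, if_pos hev]
  by_cases hend : i + 1 = Ns (blk r Ns i + 1)
  · rw [if_pos hend]
    have hs : blk r Ns i < r := blk_lt_r n r Ns h0 h2 i hi
    have hE := h7 _ hs (by rw [← hend]; exact hev)
    rw [hE, ← SN_block r Ns ms h0 h3 _ (by omega), ← hend]
  · rw [if_neg hend]
    split_ifs with h' <;> simp [h']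

lemma eps_odd_ne (h0 : Ns 0 = 0) (h2 : Ns r = n) (h3 : ∀ s < r, Ns s < Ns (s + 1))
    (h7 : ∀ s < r, Even (Ns (s + 1)) →
      (zs s ≠ 0 ↔ Even (∑ u ∈ Finset.range (s + 1), ms u * ((Ns (u + 1) : ℤ) - (Ns u : ℤ)))))
    (h8 : ∀ s < r, ¬ Even (Ns (s + 1)) → zs s ≠ 0) :
    ∀ i < n, ¬ Even (i + 1) → epsN r Ns ms zs i ≠ 0 := by
  intro i
  induction i using Nat.strong_induction_on with
  | _ i ih =>
    intro hi hev
    by_cases hi0 : i = 0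
    · subst hi0; rw [epsN]; norm_num
    have hieven : Even i := by
      rcases Nat.even_or_odd i with h | h
      · exact h
      · obtain ⟨k, hk⟩ := h
        exact absurd ⟨k + 1, by omega⟩ hev
    have hi2 : 2 ≤ i := by
      rcases hieven with ⟨k, hk⟩; omega
    rw [epsN, dif_neg hi0, if_neg hev]
    split_ifs with hS hend
    · apply mul_ne_zero
      · apply ih (i - 2) (by omega) (by omega)
        rintro ⟨l, hl⟩
        rcases hieven with ⟨k, hk⟩
        omega
      · apply pow_ne_zero
        have h1 : i - 1 + 1 = i := by omega
        have := eps_even_ne n r Ns ms zs h0 h2 h3 h7 (i - 1) (by omega)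
          (by rw [h1]; exact hieven)
        rw [h1] at this
        exact this.mpr hS
    · exact h8 _ (blk_lt_r n r Ns h0 h2 i hi) (by rw [← hend]; exact hev)
    · norm_num

lemma even_SN_shift {x y m : ℤ} (hx : x = y + m + m) : (Even x ↔ Even y) := by
  constructor
  · rintro ⟨w, hw⟩; exact ⟨w - m, by omega⟩
  · rintro ⟨w, hw⟩; exact ⟨w + m, by omega⟩

lemma pow_double_eq_one {x : ℤ} (hx : x = 1 ∨ x = -1) (t : ℕ) : x ^ (t + t) = 1 := by
  rcases hx with h | h <;> subst h
  · norm_num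
  · exact Even.neg_one_pow ⟨t, rfl⟩

lemma main_PQ (h0 : Ns 0 = 0) (h2 : Ns r = n) (h3 : ∀ s < r, Ns s < Ns (s + 1))
    (h4 : ∀ s < r, 0 ≤ ms s)
    (h6 : ∀ s < r, zs s = 0 ∨ zs s = 1 ∨ zs s = -1)
    (h7 : ∀ s < r, Even (Ns (s + 1)) →
      (zs s ≠ 0 ↔ Even (∑ u ∈ Finset.range (s + 1), ms u * ((Ns (u + 1) : ℤ) - (Ns u : ℤ)))))
    (h8 : ∀ s < r, ¬ Even (Ns (s + 1)) →
      zs s ≠ 0 ∧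
      ((∀ i < s, Even (Ns (i + 1))) →
        zs s = ∏ u ∈ Finset.range s, zs u ^ (ms u + ms (u + 1)).toNat) ∧
      (∀ t < s, ¬ Even (Ns (t + 1)) → (∀ i, t < i → i < s → Even (Ns (i + 1))) →
        Even ((∑ u ∈ Finset.range s, ms u * ((Ns (u + 1) : ℤ) - (Ns u : ℤ))) +
          ms s * ((Ns (s + 1) : ℤ) - (Ns s : ℤ) - 1)) →
        zs s = zs t * ∏ u ∈ Finset.Ico (t + 1) s, zs u ^ (ms u + ms (u + 1)).toNat)) :
    ∀ s, s < r →
      (epsN r Ns ms zs (Ns (s + 1) - 1) = zs s) ∧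
      (∀ p, ¬ Even p → Ns s < p → p ≤ Ns (s + 1) → Even (SN r Ns ms (p - 1)) →
        epsN r Ns ms zs (p - 1) = G Ns ms zs s) := by
  intro s
  induction s using Nat.strong_induction_on with
  | _ s IH =>
    intro hs
    have hd_le_n : Ns (s + 1) ≤ n := by
      rw [← h2]; exact Ns_mono_s13 r Ns h0 h3 (by omega) le_rfl
    have hcd : Ns s < Ns (s + 1) := h3 s hs
    have hQ : ∀ p, ¬ Even p → Ns s < p → p ≤ Ns (s + 1) → Even (SN r Ns ms (p - 1)) →
        epsN r Ns ms zs (p - 1) = G Ns ms zs s := by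
      intro p
      induction p using Nat.strong_induction_on with
      | _ p ihp =>
        intro hpodd hp1 hp2 hp3
        obtain ⟨l, hl⟩ : Odd p := Nat.odd_iff.mpr (Nat.not_even_iff.mp hpodd)
        by_cases hbig : Ns s + 3 ≤ p
        · -- interior of block: two-step descent
          have e1 : p - 1 + 1 = p := by omega
          have e2 : p - 1 - 2 = p - 3 := by omega
          have e3 : p - 1 - 1 = p - 2 := by omega
          have ha1 : aN r Ns ms (p - 1) = ms s :=
            aN_in_block r Ns ms h0 h3 hs (by omega) (by omega)
          have ha2 : aN r Ns ms (p - 2) = ms s :=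
            aN_in_block r Ns ms h0 h3 hs (by omega) (by omega)
          have ha3 : aN r Ns ms (p - 3) = ms s :=
            aN_in_block r Ns ms h0 h3 hs (by omega) (by omega)
          have hstep : epsN r Ns ms zs (p - 1) =
              epsN r Ns ms zs (p - 3) *
                epsN r Ns ms zs (p - 2) ^ (ms s + ms s).toNat := by
            rw [epsN, dif_neg (by omega : ¬ (p - 1 = 0)), e1, if_neg hpodd, if_pos hp3,
              e2, e3, ha1, ha2]
          have e4 : p - 2 + 1 = p - 1 := by omega
          have hne2 : epsN r Ns ms zs (p - 2) ≠ 0 := by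
            have := eps_even_ne n r Ns ms zs h0 h2 h3 h7 (p - 2) (by omega)
              (by rw [e4]; exact ⟨l, by omega⟩)
            rw [e4] at this
            exact this.mpr hp3
          have hval : epsN r Ns ms zs (p - 2) = 1 ∨ epsN r Ns ms zs (p - 2) = -1 := by
            rcases epsN_vals n r Ns ms zs h0 h2 h6 (p - 2) (by omega) with h | h | h
            · exact absurd h hne2
            · exact Or.inl h
            · exact Or.inr h
          have hms : (ms s + ms s).toNat = (ms s).toNat + (ms s).toNat :=
            Int.toNat_add (h4 s hs) (h4 s hs)
          have hSN3 : Even (SN r Ns ms (p - 3)) := by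
            have eq1 : SN r Ns ms (p - 1) = SN r Ns ms (p - 3) + ms s + ms s := by
              have q1 := SN_succ r Ns ms (p - 2)
              rw [e4] at q1
              have q2 := SN_succ r Ns ms (p - 3)
              rw [(by omega : p - 3 + 1 = p - 2)] at q2
              rw [q1, q2, ha2, ha3]
            exact (even_SN_shift eq1).mp hp3
          have hrec := ihp (p - 2) (by omega)
            (by rintro ⟨w, hw⟩; omega) (by omega) (by omega)
            (by rw [(by omega : p - 2 - 1 = p - 3)]; exact hSN3)
          rw [(by omega : p - 2 - 1 = p - 3)] at hrec
          rw [hstep, hms, pow_double_eq_one hval, mul_one, hrec]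
        · -- start of block
          by_cases hcev : Even (Ns s)
          · -- p = Ns s + 1
            obtain ⟨k, hk⟩ := hcev
            have hp : p = Ns s + 1 := by omega
            by_cases hc0 : Ns s = 0
            · have hs0 : s = 0 := by
                by_contra h'
                have h1r : 0 < r := by omega
                have : Ns 0 < Ns 1 := h3 0 h1r
                have : Ns 1 ≤ Ns s := Ns_mono_s13 r Ns h0 h3 (by omega) (by omega)
                omega
              subst hs0
              rw [hp, hc0]
              show epsN r Ns ms zs 0 = G Ns ms zs 0
              rw [epsN]
              simp [G]
            · -- Ns s ≥ 2, even; s = s' + 1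
              have hspos : s ≠ 0 := by rintro rfl; exact hc0 h0
              obtain ⟨s', rfl⟩ : ∃ s', s = s' + 1 := ⟨s - 1, by omega⟩
              have hc2 : 2 ≤ Ns (s' + 1) := by omega
              have e5 : p - 1 = Ns (s' + 1) := by omega
              have hcd' : Ns s' < Ns (s' + 1) := h3 s' (by omega)
              have ha1 : aN r Ns ms (Ns (s' + 1)) = ms (s' + 1) :=
                aN_in_block r Ns ms h0 h3 hs (by omega) (by omega)
              have ha2 : aN r Ns ms (Ns (s' + 1) - 1) = ms s' :=
                aN_in_block r Ns ms h0 h3 (by omega) (by omega) (by omega)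
              have hSc : Even (SN r Ns ms (Ns (s' + 1))) := by rw [← e5]; exact hp3
              have hstep : epsN r Ns ms zs (Ns (s' + 1)) =
                  epsN r Ns ms zs (Ns (s' + 1) - 2) *
                    epsN r Ns ms zs (Ns (s' + 1) - 1) ^ (ms (s' + 1) + ms s').toNat := by
                rw [epsN, dif_neg (by omega : ¬ (Ns (s' + 1) = 0)),
                  if_neg (by rintro ⟨w, hw⟩; omega : ¬ Even (Ns (s' + 1) + 1)),
                  if_pos hSc, ha1, ha2]
              have hprev : epsN r Ns ms zs (Ns (s' + 1) - 1) = zs s' :=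
                (IH s' (by omega) (by omega)).1
              have hGs : G Ns ms zs (s' + 1) =
                  G Ns ms zs s' * zs s' ^ (ms s' + ms (s' + 1)).toNat := by
                rw [G, if_pos ⟨k, hk⟩]
              have hsub : epsN r Ns ms zs (Ns (s' + 1) - 2) = G Ns ms zs s' := by
                rcases Nat.lt_or_ge (Ns s') (Ns (s' + 1) - 1) with hl' | hl'
                · -- previous block has length ≥ 2 : use Q(s')
                  have ha3 : aN r Ns ms (Ns (s' + 1) - 2) = ms s' :=
                    aN_in_block r Ns ms h0 h3 (by omega) (by omega) (by omega)
                  have hSN3 : Even (SN r Ns ms (Ns (s' + 1) - 2)) := by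
                    have eq1 : SN r Ns ms (Ns (s' + 1)) =
                        SN r Ns ms (Ns (s' + 1) - 2) + ms s' + ms s' := by
                      have q1 := SN_succ r Ns ms (Ns (s' + 1) - 1)
                      rw [(by omega : Ns (s' + 1) - 1 + 1 = Ns (s' + 1))] at q1
                      have q2 := SN_succ r Ns ms (Ns (s' + 1) - 2)
                      rw [(by omega : Ns (s' + 1) - 2 + 1 = Ns (s' + 1) - 1)] at q2
                      rw [q1, q2, ha2, ha3]
                    exact (even_SN_shift eq1).mp hSc
                  have := (IH s' (by omega) (by omega)).2 (Ns (s' + 1) - 1)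
                    (by rintro ⟨w, hw⟩; omega) hl' (by omega)
                    (by rw [(by omega : Ns (s' + 1) - 1 - 1 = Ns (s' + 1) - 2)]; exact hSN3)
                  rw [(by omega : Ns (s' + 1) - 1 - 1 = Ns (s' + 1) - 2)] at this
                  exact this
                · -- previous block has length 1
                  have heq : Ns s' = Ns (s' + 1) - 1 := by omega
                  have hs'0 : s' ≠ 0 := by
                    rintro rfl; rw [h0] at heq; omega
                  obtain ⟨s'', rfl⟩ : ∃ s'', s' = s'' + 1 := ⟨s' - 1, by omega⟩
                  have hprev2 : epsN r Ns ms zs (Ns (s'' + 1) - 1) = zs s'' :=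
                    (IH s'' (by omega) (by omega)).1
                  have e6 : Ns (s'' + 1 + 1) - 2 = Ns (s'' + 1) - 1 := by omega
                  have hodd' : ¬ Even (Ns (s'' + 1)) := by
                    rw [heq]
                    rintro ⟨w, hw⟩; omega
                  rw [e6, hprev2, G, if_neg hodd']
              rw [e5, hstep, hsub, hprev, hGs, add_comm (ms (s' + 1)) (ms s')]
          · -- Ns s odd : p = Ns s + 2
            obtain ⟨w, hw⟩ : Odd (Ns s) := Nat.odd_iff.mpr (Nat.not_even_iff.mp
              (by exact hcev))
            have hp : p = Ns s + 2 := by omega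
            have hs1 : s ≠ 0 := by rintro rfl; omega
            obtain ⟨s', rfl⟩ : ∃ s', s = s' + 1 := ⟨s - 1, by omega⟩
            have e5 : p - 1 = Ns (s' + 1) + 1 := by omega
            have ha1 : aN r Ns ms (Ns (s' + 1) + 1) = ms (s' + 1) :=
              aN_in_block r Ns ms h0 h3 hs (by omega) (by omega)
            have ha2 : aN r Ns ms (Ns (s' + 1)) = ms (s' + 1) :=
              aN_in_block r Ns ms h0 h3 hs (by omega) (by omega)
            have hSc : Even (SN r Ns ms (Ns (s' + 1) + 1)) := by rw [← e5]; exact hp3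
            have hstep : epsN r Ns ms zs (Ns (s' + 1) + 1) =
                epsN r Ns ms zs (Ns (s' + 1) - 1) *
                  epsN r Ns ms zs (Ns (s' + 1)) ^ (ms (s' + 1) + ms (s' + 1)).toNat := by
              rw [epsN, dif_neg (by omega : ¬ (Ns (s' + 1) + 1 = 0)),
                if_neg (by rintro ⟨u, hu⟩; omega : ¬ Even (Ns (s' + 1) + 1 + 1)),
                if_pos hSc, (by omega : Ns (s' + 1) + 1 - 2 = Ns (s' + 1) - 1),
                (by omega : Ns (s' + 1) + 1 - 1 = Ns (s' + 1)), ha1, ha2]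
            have hne2 : epsN r Ns ms zs (Ns (s' + 1)) ≠ 0 := by
              have := eps_even_ne n r Ns ms zs h0 h2 h3 h7 (Ns (s' + 1)) (by omega)
                ⟨w + 1, by omega⟩
              exact this.mpr hSc
            have hval : epsN r Ns ms zs (Ns (s' + 1)) = 1 ∨
                epsN r Ns ms zs (Ns (s' + 1)) = -1 := by
              rcases epsN_vals n r Ns ms zs h0 h2 h6 (Ns (s' + 1)) (by omega) with h | h | h
              · exact absurd h hne2
              · exact Or.inl h
              · exact Or.inr h
            have hms : (ms (s' + 1) + ms (s' + 1)).toNat =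
                (ms (s' + 1)).toNat + (ms (s' + 1)).toNat :=
              Int.toNat_add (h4 (s' + 1) hs) (h4 (s' + 1) hs)
            have hprev : epsN r Ns ms zs (Ns (s' + 1) - 1) = zs s' :=
              (IH s' (by omega) (by omega)).1
            rw [e5, hstep, hms, pow_double_eq_one hval, mul_one, hprev, G, if_neg hcev]
    refine ⟨?_, hQ⟩
    -- P(s)
    by_cases hdev : Even (Ns (s + 1))
    · have hd2 : 2 ≤ Ns (s + 1) := by
        rcases hdev with ⟨w, hw⟩; omega
      have hb : blk r Ns (Ns (s + 1) - 1) = s :=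
        blk_eq r Ns h0 h3 _ s hs (by omega) (by omega)
      rw [epsN, dif_neg (by omega : ¬ (Ns (s + 1) - 1 = 0)), hb,
        (by omega : Ns (s + 1) - 1 + 1 = Ns (s + 1)), if_pos hdev, if_pos rfl]
    · by_cases hSd : Even (SN r Ns ms (Ns (s + 1) - 1))
      · have hg := hQ (Ns (s + 1)) hdev hcd le_rfl hSd
        rw [hg]
        have hE3 := h8 s hs hdev
        by_cases hall : ∀ i < s, Even (Ns (i + 1))
        · rw [G_prod_a Ns ms zs s hall]
          exact (hE3.2.1 hall).symm
        · push_neg at hall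
          obtain ⟨i0, hi0lt, hi0odd⟩ := hall
          set t := Nat.findGreatest (fun i => ¬ Even (Ns (i + 1))) (s - 1) with ht_def
          have hPt : ¬ Even (Ns (t + 1)) :=
            Nat.findGreatest_spec (P := fun i => ¬ Even (Ns (i + 1))) (by omega) hi0odd
          have hts : t < s := by
            have : t ≤ s - 1 := Nat.findGreatest_le (s - 1)
            omega
          have hmax : ∀ j, t < j → j < s → Even (Ns (j + 1)) := by
            intro j hj1 hj2
            by_contra hc
            exact Nat.findGreatest_is_greatest (P := fun i => ¬ Even (Ns (i + 1)))
              hj1 (by omega) hc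
          have hpar : Even ((∑ u ∈ Finset.range s, ms u * ((Ns (u + 1) : ℤ) - (Ns u : ℤ))) +
              ms s * ((Ns (s + 1) : ℤ) - (Ns s : ℤ) - 1)) := by
            have q1 : SN r Ns ms (Ns (s + 1) - 1) =
                SN r Ns ms (Ns s) + ((Ns (s + 1) - 1 - Ns s : ℕ) : ℤ) * ms s := by
              rw [← SN_offset r Ns ms h0 h3 hs (Ns (s + 1) - 1 - Ns s) (by omega)]
              congr 1
              omega
            have q2 : ((Ns (s + 1) - 1 - Ns s : ℕ) : ℤ) =
                (Ns (s + 1) : ℤ) - (Ns s : ℤ) - 1 := by omega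
            have q3 := SN_block r Ns ms h0 h3 s (by omega)
            rw [q1, q2, q3] at hSd
            convert hSd using 2
            ring
          rw [G_prod_b Ns ms zs t s hts hPt hmax]
          exact (hE3.2.2 t hts hPt hmax hpar).symm
      · have hd1 : Ns (s + 1) ≠ 1 := by
          rintro hd
          apply hSd
          rw [hd]
          simp [SN]
        have hd3 : 3 ≤ Ns (s + 1) := by
          obtain ⟨w, hw⟩ : Odd (Ns (s + 1)) := Nat.odd_iff.mpr (Nat.not_even_iff.mp hdev)
          omega
        have hb : blk r Ns (Ns (s + 1) - 1) = s :=
          blk_eq r Ns h0 h3 _ s hs (by omega) (by omega)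
        rw [epsN, dif_neg (by omega : ¬ (Ns (s + 1) - 1 = 0)),
          (by omega : Ns (s + 1) - 1 + 1 = Ns (s + 1)), if_neg hdev, if_neg hSd, hb,
          if_pos rfl]

lemma range_ite_sum (m : ℕ) (hm : m ≤ n) :
    ∑ k ∈ Finset.range n, (if k < m then aN r Ns ms k else 0) = SN r Ns ms m := by
  rw [← Finset.sum_subset (Finset.range_subset_range.mpr hm)
    (fun x _ hnx => if_neg (fun hc => hnx (Finset.mem_range.mpr hc)))]
  unfold SN
  exact Finset.sum_congr rfl (fun x hx => if_pos (Finset.mem_range.mp hx))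

lemma sum_filter_le (i : Fin n) :
    (∑ j ∈ Finset.univ.filter (fun j : Fin n => j ≤ i), aN r Ns ms (j : ℕ)) =
      SN r Ns ms ((i : ℕ) + 1) := by
  calc (∑ j ∈ Finset.univ.filter (fun j : Fin n => j ≤ i), aN r Ns ms (j : ℕ))
      = ∑ j : Fin n, (if (j : ℕ) < (i : ℕ) + 1 then aN r Ns ms (j : ℕ) else 0) := by
        rw [Finset.sum_filter]
        apply Finset.sum_congr rfl
        intro j _
        by_cases hj : j ≤ i
        · rw [if_pos hj, if_pos (Nat.lt_succ_of_le hj)]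
        · rw [if_neg hj, if_neg (fun hc => hj (Fin.le_def.mpr (by omega)))]
    _ = ∑ k ∈ Finset.range n, (if k < (i : ℕ) + 1 then aN r Ns ms k else 0) :=
        Fin.sum_univ_eq_sum_range (fun k => if k < (i : ℕ) + 1 then aN r Ns ms k else 0) n
    _ = SN r Ns ms ((i : ℕ) + 1) := range_ite_sum n r Ns ms ((i : ℕ) + 1) i.isLt

lemma sum_filter_lt (i : Fin n) :
    (∑ j ∈ Finset.univ.filter (fun j : Fin n => j < i), aN r Ns ms (j : ℕ)) =
      SN r Ns ms (i : ℕ) := by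
  calc (∑ j ∈ Finset.univ.filter (fun j : Fin n => j < i), aN r Ns ms (j : ℕ))
      = ∑ j : Fin n, (if (j : ℕ) < (i : ℕ) then aN r Ns ms (j : ℕ) else 0) := by
        rw [Finset.sum_filter]
        apply Finset.sum_congr rfl
        intro j _
        by_cases hj : j < i
        · rw [if_pos hj, if_pos (Fin.lt_def.mp hj)]
        · rw [if_neg hj, if_neg (fun hc => hj (Fin.lt_def.mpr hc))]
    _ = ∑ k ∈ Finset.range n, (if k < (i : ℕ) then aN r Ns ms k else 0) :=
        Fin.sum_univ_eq_sum_range (fun k => if k < (i : ℕ) then aN r Ns ms k else 0) n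
    _ = SN r Ns ms (i : ℕ) := range_ite_sum n r Ns ms (i : ℕ) (le_of_lt i.isLt)

end
end UpsilonAux

/-- **Proposition 4.2.** The map `Υ` from naive EGK data of length `n` to EGK data of
length `n` is surjective. -/
theorem upsilon_surjective (n r : ℕ) (Ns : ℕ → ℕ) (ms zs : ℕ → ℤ)
    (h : IsEGKDatum n r Ns ms zs) :
    ∃ a ε : Fin n → ℤ, IsNaiveEGK n a ε ∧ UpsilonRel n a ε r Ns ms zs := by
  obtain ⟨h1, h2, h3, h4, h5, h6, h7, h8⟩ := h
  refine ⟨fun i => UpsilonAux.aN r Ns ms (i : ℕ), fun i => UpsilonAux.epsN r Ns ms zs (i : ℕ),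
    ⟨?_, ?_, ?_, ?_, ?_, ?_, ?_⟩, ⟨⟨h1, h2, h3, ?_, h5⟩, ?_⟩⟩
  · intro i
    exact h4 _ (UpsilonAux.blk_lt_r n r Ns h1 h2 (i : ℕ) i.isLt)
  · intro i j hij
    exact UpsilonAux.ms_mono r ms h5 (UpsilonAux.blk_mono r Ns h1 (Fin.le_def.mp hij))
      (UpsilonAux.blk_lt_r n r Ns h1 h2 (j : ℕ) j.isLt)
  · intro i
    exact UpsilonAux.epsN_vals n r Ns ms zs h1 h2 h6 (i : ℕ) i.isLt
  · intro i hev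
    rw [UpsilonAux.sum_filter_le n r Ns ms i]
    exact UpsilonAux.eps_even_ne n r Ns ms zs h1 h2 h3 h7 (i : ℕ) i.isLt hev
  · intro i hodd
    exact UpsilonAux.eps_odd_ne n r Ns ms zs h1 h2 h3 h7
      (fun s hs ho => (h8 s hs ho).1) (i : ℕ) i.isLt hodd
  · intro hn
    show UpsilonAux.epsN r Ns ms zs 0 = 1
    rw [UpsilonAux.epsN, dif_pos rfl]
  · intro i h2i hodd hev hsub2 hsub1
    have hS : Even (UpsilonAux.SN r Ns ms (i : ℕ)) := by
      rw [← UpsilonAux.sum_filter_lt n r Ns ms i]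
      exact hev
    show UpsilonAux.epsN r Ns ms zs (i : ℕ) = _
    rw [UpsilonAux.epsN, dif_neg (by omega : ¬ ((i : ℕ) = 0)), if_neg hodd, if_pos hS]
  · intro s hs i hi1 hi2
    exact UpsilonAux.aN_in_block r Ns ms h1 h3 hs hi1 hi2
  · intro s hs hlt
    exact ((UpsilonAux.main_PQ n r Ns ms zs h1 h2 h3 h4 h6 h7 h8 s hs).1).symm

end
end
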